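/- arXiv:2408.03610 — 4 statements merged into one kernel-verified Lean document; each statement's English description precedes it below -/
import Mathlib

section
/- Let T be a string with wildcards, Sel a set of positions containing n, and define Jump[i,j] for i ∈ Sel and j ∈ [1..n] as max{i'−i : i' ∈ Sel, i' ≥ i, T[i..i'] ∼ T[j..j+i'−i]} (or −∞ if no such i' exists). Let i_r < i_{r+1} be two consecutive elements of Sel with ℓ_r = i_{r+1} − i_r, and suppose j + ℓ_r ≤ n. Then Jump satisfies the recurrence: Jump[i_r, j] = −∞ if T[i_r] ≁ T[j]; Jump[i_r, j] = max(0, ℓ_r + Jump[i_{r+1}, j+ℓ_r]) if T[i_r] ∼ T[j] and T[i_r..i_{r+1}) ∼ T[j..j+ℓ_r); and Jump[i_r, j] = 0 otherwise. -/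
variable {α : Type*}

/-- Wildcard match relation on characters: `a ∼ b ↔ a = b ∨ a = d ∨ b = d`,
where `d` is the wildcard. -/
def mtch (d a b : α) : Prop := a = b ∨ a = d ∨ b = d

instance [DecidableEq α] (d a b : α) : Decidable (mtch d a b) :=
  inferInstanceAs (Decidable (a = b ∨ a = d ∨ b = d))

/-- Positionwise match of equal-length strings (lists). -/
def smatch (d : α) (X Y : List α) : Prop :=
  X.length = Y.length ∧ ∀ i < X.length, mtch d (X.getD i d) (Y.getD i d)

/-- Longest common extension with wildcards in a single string `T`,
0-based positions. -/
def lcew [DecidableEq α] (d : α) (T : List α) (i j : ℕ) : ℕ :=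
  Nat.findGreatest
    (fun ℓ => ℓ ≤ min (T.length - i) (T.length - j) ∧
      ∀ p < ℓ, mtch d (T.getD (i + p) d) (T.getD (j + p) d)) T.length

/-- Longest common extension with wildcards between two strings `P` and `Q`,
0-based positions. -/
def lcew2 [DecidableEq α] (d : α) (P Q : List α) (i j : ℕ) : ℕ :=
  Nat.findGreatest
    (fun ℓ => ℓ ≤ min (P.length - i) (Q.length - j) ∧
      ∀ p < ℓ, mtch d (P.getD (i + p) d) (Q.getD (j + p) d))
    (P.length + Q.length)

/-- The fragment `T[i..i']` (inclusive) matches `T[j..j+(i'-i)]` positionwise. -/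
def fragMatch [DecidableEq α] (d : α) (T : List α) (i i' j : ℕ) : Prop :=
  ∀ p ≤ i' - i, mtch d (T.getD (i + p) d) (T.getD (j + p) d)

instance [DecidableEq α] (d : α) (T : List α) (i i' j : ℕ) :
    Decidable (fragMatch d T i i' j) := by
  unfold fragMatch; infer_instance

/-- `jump d T Sel i j = max {i' - i : i' ∈ Sel, i' ≥ i, T[i..i'] ∼ T[j..j+i'-i]}`,
or `⊥` (i.e. `-∞`) if no such `i'` exists. -/
def jump [DecidableEq α] (d : α) (T : List α) (Sel : Finset ℕ) (i j : ℕ) :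
    WithBot ℕ :=
  WithBot.map (fun i' => i' - i)
    ((Sel.filter (fun i' => i ≤ i' ∧ j + (i' - i) < T.length ∧
        fragMatch d T i i' j)).max)

theorem stmt11 [DecidableEq α] (d : α) (T : List α) (Sel : Finset ℕ)
    (hne : T ≠ []) (hlast : (T.length - 1) ∈ Sel)
    (hSel : ∀ q ∈ Sel, q < T.length)
    (i₁ i₂ j : ℕ) (h1 : i₁ ∈ Sel) (h2 : i₂ ∈ Sel) (h12 : i₁ < i₂)
    (hcons : ∀ q ∈ Sel, ¬(i₁ < q ∧ q < i₂))
    (hj : j + (i₂ - i₁) < T.length) :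
    (¬ mtch d (T.getD i₁ d) (T.getD j d) → jump d T Sel i₁ j = ⊥) ∧
    ((mtch d (T.getD i₁ d) (T.getD j d) ∧
        ∀ p < i₂ - i₁, mtch d (T.getD (i₁ + p) d) (T.getD (j + p) d)) →
      jump d T Sel i₁ j =
        max (WithBot.map (fun v => (i₂ - i₁) + v) (jump d T Sel i₂ (j + (i₂ - i₁))))
          (0 : WithBot ℕ)) ∧
    ((mtch d (T.getD i₁ d) (T.getD j d) ∧
        ¬ ∀ p < i₂ - i₁, mtch d (T.getD (i₁ + p) d) (T.getD (j + p) d)) →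
      jump d T Sel i₁ j = (0 : WithBot ℕ)) := by
  have hjlt : j < T.length := lt_of_le_of_lt (Nat.le_add_right _ _) hj
  have hi1mem : ∀ (hm : mtch d (T.getD i₁ d) (T.getD j d)),
      i₁ ∈ Sel.filter (fun i' => i₁ ≤ i' ∧ j + (i' - i₁) < T.length ∧
        fragMatch d T i₁ i' j) := by
    intro hm
    refine Finset.mem_filter.mpr ⟨h1, le_refl _, by simpa using hjlt, ?_⟩
    intro p hp
    have hp0 : p = 0 := by omega
    subst hp0; simpa using hm
  refine ⟨?_, ?_, ?_⟩
  · intro hm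
    have hA : (Sel.filter (fun i' => i₁ ≤ i' ∧ j + (i' - i₁) < T.length ∧
        fragMatch d T i₁ i' j)) = ∅ := by
      refine Finset.filter_eq_empty_iff.mpr ?_
      rintro i' hi' ⟨hle, hlt, hfrag⟩
      exact hm (by simpa using hfrag 0 (Nat.zero_le _))
    rw [jump, hA]
    simp
  · rintro ⟨hm0, hall⟩
    have hAB : (Sel.filter (fun i' => i₁ ≤ i' ∧ j + (i' - i₁) < T.length ∧
          fragMatch d T i₁ i' j))
        = insert i₁ (Sel.filter (fun i' => i₂ ≤ i' ∧
            (j + (i₂ - i₁)) + (i' - i₂) < T.length ∧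
            fragMatch d T i₂ i' (j + (i₂ - i₁)))) := by
      ext i'
      simp only [Finset.mem_insert, Finset.mem_filter]
      constructor
      · rintro ⟨hi', hle, hlt, hfrag⟩
        rcases eq_or_lt_of_le hle with h | h
        · exact Or.inl h.symm
        · right
          have hge : i₂ ≤ i' := by
            by_contra hlt2
            exact hcons i' hi' ⟨h, by omega⟩
          refine ⟨hi', hge, by omega, ?_⟩
          intro p hp
          have e1 : i₂ + p = i₁ + ((i₂ - i₁) + p) := by omega
          have e2 : j + (i₂ - i₁) + p = j + ((i₂ - i₁) + p) := by omega
          rw [e1, e2]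
          exact hfrag _ (by omega)
      · rintro (h | ⟨hi', hge, hlt, hfrag⟩)
        · subst h
          exact Finset.mem_filter.mp (hi1mem hm0)
        · refine ⟨hi', by omega, by omega, ?_⟩
          intro p hp
          rcases lt_or_ge p (i₂ - i₁) with h | h
          · exact hall p h
          · have e1 : i₁ + p = i₂ + (p - (i₂ - i₁)) := by omega
            have e2 : j + p = (j + (i₂ - i₁)) + (p - (i₂ - i₁)) := by omega
            rw [e1, e2]
            exact hfrag _ (by omega)
    rw [jump, jump, hAB, Finset.max_insert]
    rcases hB : (Sel.filter (fun i' => i₂ ≤ i' ∧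
        (j + (i₂ - i₁)) + (i' - i₂) < T.length ∧
        fragMatch d T i₂ i' (j + (i₂ - i₁)))).max with _ | m
    · show WithBot.map (fun i' => i' - i₁) (WithBot.some i₁ ⊔ (⊥ : WithBot ℕ)) =
        WithBot.map (fun v => i₂ - i₁ + v)
          (WithBot.map (fun i' => i' - i₂) (⊥ : WithBot ℕ)) ⊔ 0
      simp
    · have hm2 : m ∈ Sel.filter (fun i' => i₂ ≤ i' ∧
          (j + (i₂ - i₁)) + (i' - i₂) < T.length ∧
          fragMatch d T i₂ i' (j + (i₂ - i₁))) := Finset.mem_of_max hB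
      have hm2' : i₂ ≤ m := (Finset.mem_filter.mp hm2).2.1
      have hmax : (WithBot.some i₁ ⊔ WithBot.some m) = WithBot.some m :=
        max_eq_right (WithBot.coe_le_coe.mpr (by omega))
      show WithBot.map (fun i' => i' - i₁) (WithBot.some i₁ ⊔ WithBot.some m) =
        WithBot.map (fun v => i₂ - i₁ + v)
          (WithBot.map (fun i' => i' - i₂) (WithBot.some m)) ⊔ 0
      rw [hmax]
      have he : m - i₁ = (i₂ - i₁) + (m - i₂) := by omega
      simp only [WithBot.map_coe, he]
      exact (max_eq_left (WithBot.coe_le_coe.mpr (Nat.zero_le _))).symm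
  · rintro ⟨hm0, hnall⟩
    push_neg at hnall
    obtain ⟨p₀, hp₀lt, hp₀⟩ := hnall
    have hA : (Sel.filter (fun i' => i₁ ≤ i' ∧ j + (i' - i₁) < T.length ∧
        fragMatch d T i₁ i' j)) = {i₁} := by
      ext i'
      simp only [Finset.mem_filter, Finset.mem_singleton]
      constructor
      · rintro ⟨hi', hle, hlt, hfrag⟩
        by_contra hne'
        have h : i₁ < i' := lt_of_le_of_ne hle (Ne.symm hne')
        have hge : i₂ ≤ i' := by
          by_contra hlt2
          exact hcons i' hi' ⟨h, by omega⟩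
        exact hp₀ (hfrag p₀ (by omega))
      · rintro h
        subst h
        exact Finset.mem_filter.mp (hi1mem hm0)
    rw [jump, hA]
    simp
end

section
/- Let A be an a×b Boolean matrix and B a b×c Boolean matrix. Encode A into a string S_A of length ab in row-major order via φ_A(1) = '1', φ_A(0) = ◊, and encode B into a string S_B of length bc in column-major order via φ_B(1) = '0', φ_B(0) = '1'. Then for all i ∈ [0..a) and j ∈ [0..c): (AB)[i+1, j+1] = 1 if and only if LCEW_{S_A,S_B}(b·i + 1, b·j + 1) < b, where LCEW_{S_A,S_B}(p,q) is the length of the longest matching prefixes of S_A[p..] and S_B[q..] under the wildcard match relation. -/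
variable {α : Type*}

theorem stmt12 (A B : ℕ → ℕ → Bool) (a b c : ℕ) (SA SB : List ℕ)
    (hSA : SA = (List.range (a * b)).map
      (fun idx => if A (idx / b) (idx % b) then 1 else 2))
    (hSB : SB = (List.range (b * c)).map
      (fun idx => if B (idx % b) (idx / b) then 0 else 1))
    (i j : ℕ) (hi : i < a) (hj : j < c) :
    ((∃ k < b, A i k = true ∧ B k j = true) ↔
      lcew2 2 SA SB (b * i) (b * j) < b) := by
  rcases Nat.eq_zero_or_pos b with hb | hb
  · subst hb
    simp [lcew2]
  have hlenA : SA.length = a * b := by simp [hSA]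
  have hlenB : SB.length = b * c := by simp [hSB]
  have hA : ∀ p < b, SA.getD (b * i + p) 2 = if A i p then 1 else 2 := by
    intro p hp
    have hlt : b * i + p < a * b := by
      calc b * i + p < b * (i + 1) := by rw [Nat.mul_succ]; omega
        _ ≤ b * a := by exact Nat.mul_le_mul_left b hi
        _ = a * b := Nat.mul_comm b a
    have hdiv : (b * i + p) / b = i := by
      rw [Nat.mul_add_div hb, Nat.div_eq_of_lt hp]
      omega
    have hmod : (b * i + p) % b = p := by
      rw [Nat.mul_add_mod, Nat.mod_eq_of_lt hp]
    rw [hSA, List.getD_eq_getElem?_getD, List.getElem?_map,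
      List.getElem?_range hlt]
    simp [hdiv, hmod]
  have hB : ∀ p < b, SB.getD (b * j + p) 2 = if B p j then 0 else 1 := by
    intro p hp
    have hlt : b * j + p < b * c := by
      calc b * j + p < b * (j + 1) := by rw [Nat.mul_succ]; omega
        _ ≤ b * c := Nat.mul_le_mul_left b hj
    have hdiv : (b * j + p) / b = j := by
      rw [Nat.mul_add_div hb, Nat.div_eq_of_lt hp]
      omega
    have hmod : (b * j + p) % b = p := by
      rw [Nat.mul_add_mod, Nat.mod_eq_of_lt hp]
    rw [hSB, List.getD_eq_getElem?_getD, List.getElem?_map,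
      List.getElem?_range hlt]
    simp [hdiv, hmod]
  have hm : ∀ p < b,
      (mtch 2 (SA.getD (b * i + p) 2) (SB.getD (b * j + p) 2) ↔
        ¬(A i p = true ∧ B p j = true)) := by
    intro p hp
    rw [hA p hp, hB p hp]
    cases hAp : A i p <;> cases hBp : B p j <;> simp [mtch]
  set P : ℕ → Prop := fun ℓ => ℓ ≤ min (SA.length - b * i) (SB.length - b * j) ∧
      ∀ p < ℓ, mtch 2 (SA.getD (b * i + p) 2) (SB.getD (b * j + p) 2) with hP
  have hP0 : P 0 := ⟨Nat.zero_le _, by intro p hp; omega⟩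
  constructor
  · rintro ⟨k, hk, hAk, hBk⟩
    by_contra h
    push_neg at h
    have hspec0 := Nat.findGreatest_spec (Nat.zero_le (SA.length + SB.length)) hP0
    have hspec : P (lcew2 2 SA SB (b * i) (b * j)) := hspec0
    have := hspec.2 k (lt_of_lt_of_le hk h)
    exact (hm k hk).mp this ⟨hAk, hBk⟩
  · intro h
    by_contra hne
    push_neg at hne
    have hPb : P b := by
      constructor
      · have h1 : b * i + b ≤ a * b := by
          calc b * i + b = b * (i + 1) := by ring
            _ ≤ b * a := Nat.mul_le_mul_left b hi
            _ = a * b := Nat.mul_comm b a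
        have h2 : b * j + b ≤ b * c := by
          calc b * j + b = b * (j + 1) := by ring
            _ ≤ b * c := Nat.mul_le_mul_left b hj
        omega
      · intro p hp
        exact (hm p hp).mpr (fun ⟨h1, h2⟩ => hne p hp h1 h2)
    have hle : b ≤ SA.length + SB.length := by
      have ha : 0 < a := by omega
      have : b ≤ a * b := Nat.le_mul_of_pos_left b ha
      omega
    have hge : b ≤ lcew2 2 SA SB (b * i) (b * j) := by
      unfold lcew2
      exact Nat.le_findGreatest hle hPb
    omega
end

section
/- With the encoding of Boolean matrices A (a×b, row-major, 1 ↦ '1', 0 ↦ ◊) and B (b×c, column-major, 1 ↦ '0', 0 ↦ '1') into strings S_A and S_B: for all i ∈ [0..a), j ∈ [0..c), and x ∈ [1..min(a−i, c−j)], it holds that LCEW_{S_A,S_B}(bi+1, bj+1) ≥ bx if and only if (AB)[i+y, j+y] = 0 for all y ∈ [1..x]. -/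
variable {α : Type*}

theorem stmt13 (A B : ℕ → ℕ → Bool) (a b c : ℕ) (SA SB : List ℕ)
    (hSA : SA = (List.range (a * b)).map
      (fun idx => if A (idx / b) (idx % b) then 1 else 2))
    (hSB : SB = (List.range (b * c)).map
      (fun idx => if B (idx % b) (idx / b) then 0 else 1))
    (i j x : ℕ) (hi : i < a) (hj : j < c)
    (hx1 : 1 ≤ x) (hx : x ≤ min (a - i) (c - j)) :
    (b * x ≤ lcew2 2 SA SB (b * i) (b * j) ↔
      ∀ y, 1 ≤ y → y ≤ x →
        ¬ ∃ k < b, A (i + y - 1) k = true ∧ B k (j + y - 1) = true) := by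
  -- case b = 0
  rcases Nat.eq_zero_or_pos b with hb | hb
  · subst hb
    constructor
    · rintro _ y _ _ ⟨k, hk, _⟩; omega
    · intro _; simp
  -- lengths
  have hlenA : SA.length = a * b := by simp [hSA]
  have hlenB : SB.length = b * c := by simp [hSB]
  have hxa : x ≤ a - i := le_trans hx (min_le_left _ _)
  have hxc : x ≤ c - j := le_trans hx (min_le_right _ _)
  have f1 : b * i + b * x ≤ a * b := by
    calc b * i + b * x ≤ b * i + b * (a - i) :=
          Nat.add_le_add_left (Nat.mul_le_mul_left _ hxa) _
      _ = b * a := by rw [← Nat.mul_add]; congr 1; omega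
      _ = a * b := Nat.mul_comm _ _
  have f2 : b * j + b * x ≤ b * c := by
    calc b * j + b * x ≤ b * j + b * (c - j) :=
          Nat.add_le_add_left (Nat.mul_le_mul_left _ hxc) _
      _ = b * c := by rw [← Nat.mul_add]; congr 1; omega
  -- getD formulas
  have hgA : ∀ idx < a * b, SA.getD idx 2 =
      if A (idx / b) (idx % b) then 1 else 2 := by
    intro idx h
    subst hSA
    rw [List.getD_eq_getElem?_getD, List.getElem?_map, List.getElem?_range h]
    rfl
  have hgB : ∀ idx < b * c, SB.getD idx 2 =
      if B (idx % b) (idx / b) then 0 else 1 := by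
    intro idx h
    subst hSB
    rw [List.getD_eq_getElem?_getD, List.getElem?_map, List.getElem?_range h]
    rfl
  -- match characterization
  have hm : ∀ p < b * x,
      (mtch 2 (SA.getD (b * i + p) 2) (SB.getD (b * j + p) 2) ↔
        ¬(A (i + p / b) (p % b) = true ∧ B (p % b) (j + p / b) = true)) := by
    intro p hp
    have hpA : b * i + p < a * b := by omega
    have hpB : b * j + p < b * c := by omega
    rw [hgA _ hpA, hgB _ hpB, Nat.mul_add_div hb, Nat.mul_add_mod,
      Nat.mul_add_div hb, Nat.mul_add_mod]
    rcases hA : A (i + p / b) (p % b) <;>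
      rcases hB : B (p % b) (j + p / b) <;> simp [mtch]
  -- abbreviate the predicate
  set P : ℕ → Prop := fun ℓ => ℓ ≤ min (SA.length - b * i) (SB.length - b * j) ∧
      ∀ p < ℓ, mtch 2 (SA.getD (b * i + p) 2) (SB.getD (b * j + p) 2) with hP
  have hlcew : lcew2 2 SA SB (b * i) (b * j) =
      Nat.findGreatest P (SA.length + SB.length) := rfl
  rw [hlcew]
  constructor
  · intro h y hy1 hy2
    rintro ⟨k, hk, hA, hB⟩
    have hpos : b * x ≠ 0 := by positivity
    have hfg : Nat.findGreatest P (SA.length + SB.length) ≠ 0 := by omega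
    have hspec : P (Nat.findGreatest P (SA.length + SB.length)) :=
      (Nat.findGreatest_eq_iff.mp rfl).2.1 hfg
    set p := b * (y - 1) + k with hpdef
    have hplt : p < b * x := by
      have : b * (y - 1) + k < b * y := by
        have : b * (y - 1) + b = b * y := by rw [← Nat.mul_succ]; congr 1; omega
        omega
      have : b * y ≤ b * x := Nat.mul_le_mul_left _ hy2
      omega
    have hmatch := hspec.2 p (lt_of_lt_of_le hplt h)
    rw [hm p hplt] at hmatch
    apply hmatch
    have e1 : p / b = y - 1 := by
      rw [hpdef, Nat.mul_add_div hb, Nat.div_eq_of_lt hk, Nat.add_zero]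
    have e2 : p % b = k := by
      rw [hpdef, Nat.mul_add_mod, Nat.mod_eq_of_lt hk]
    rw [e1, e2]
    have e3 : i + (y - 1) = i + y - 1 := by omega
    have e4 : j + (y - 1) = j + y - 1 := by omega
    rw [e3, e4]
    exact ⟨hA, hB⟩
  · intro h
    apply Nat.le_findGreatest
    · omega
    · constructor
      · rw [hlenA, hlenB]; omega
      · intro p hp
        rw [hm p hp]
        rintro ⟨hA, hB⟩
        have hylt : p / b < x := by
          rw [Nat.div_lt_iff_lt_mul hb, Nat.mul_comm x b]; exact hp
        refine h (p / b + 1) (Nat.le_add_left 1 _) hylt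
          ⟨p % b, Nat.mod_lt _ hb, ?_, ?_⟩
        · have : i + (p / b + 1) - 1 = i + p / b := by
            rw [← Nat.add_assoc, Nat.add_sub_cancel]
          rw [this]; exact hA
        · have : j + (p / b + 1) - 1 = j + p / b := by
            rw [← Nat.add_assoc, Nat.add_sub_cancel]
          rw [this]; exact hB
end

section
/- Let T = P · Q be the concatenation of strings P and Q over an alphabet with wildcards. Then for any i ≤ |P| and j ≤ |Q|, the two-string longest common extension with wildcards satisfies LCEW_{P,Q}(i,j) = min(LCEW_T(i, j + |P|), |P| − i + 1, |Q| − j + 1). -/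
variable {α : Type*}

theorem stmt18 [DecidableEq α] (d : α) (P Q : List α) (i j : ℕ)
    (hi : i < P.length) (hj : j < Q.length) :
    lcew2 d P Q i j =
      min (lcew d (P ++ Q) i (j + P.length))
        (min (P.length - i) (Q.length - j)) := by
  have hTlen : (P ++ Q).length = P.length + Q.length := by simp
  set m := min (P.length - i) (Q.length - j) with hm
  -- pointwise dictionary
  have hgetP : ∀ p, i + p < P.length →
      (P ++ Q).getD (i + p) d = P.getD (i + p) d := fun p hp =>
    List.getD_append _ _ _ _ hp
  have hgetQ : ∀ p, (P ++ Q).getD (j + P.length + p) d = Q.getD (j + p) d := by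
    intro p
    have h1 : P.length ≤ j + P.length + p := by omega
    rw [List.getD_append_right _ _ _ _ h1]
    congr 1
    omega
  -- L2 satisfies its predicate
  have spec2 : lcew2 d P Q i j ≤ m ∧
      ∀ p < lcew2 d P Q i j, mtch d (P.getD (i + p) d) (Q.getD (j + p) d) := by
    unfold lcew2
    exact Nat.findGreatest_spec
      (P := fun ℓ => ℓ ≤ min (P.length - i) (Q.length - j) ∧
        ∀ p < ℓ, mtch d (P.getD (i + p) d) (Q.getD (j + p) d))
      (m := 0) (Nat.zero_le _)
      ⟨Nat.zero_le _, fun p hp => absurd hp (by omega)⟩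
  have spec1 : lcew d (P ++ Q) i (j + P.length) ≤
        min ((P ++ Q).length - i) ((P ++ Q).length - (j + P.length)) ∧
      ∀ p < lcew d (P ++ Q) i (j + P.length),
        mtch d ((P ++ Q).getD (i + p) d) ((P ++ Q).getD (j + P.length + p) d) := by
    unfold lcew
    exact Nat.findGreatest_spec
      (P := fun ℓ => ℓ ≤ min ((P ++ Q).length - i) ((P ++ Q).length - (j + P.length)) ∧
        ∀ p < ℓ, mtch d ((P ++ Q).getD (i + p) d) ((P ++ Q).getD (j + P.length + p) d))
      (m := 0) (Nat.zero_le _)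
      ⟨Nat.zero_le _, fun p hp => absurd hp (by omega)⟩
  apply le_antisymm
  · -- L2 ≤ min L1 m
    refine le_min ?_ spec2.1
    unfold lcew
    apply Nat.le_findGreatest
    · rw [hTlen]; omega
    · refine ⟨by rw [hTlen]; omega, ?_⟩
      intro p hp
      have hpm : p < m := lt_of_lt_of_le hp spec2.1
      have hip : i + p < P.length := by omega
      rw [hgetP p hip, hgetQ p]
      exact spec2.2 p hp
  · -- min L1 m ≤ L2
    unfold lcew2
    apply Nat.le_findGreatest
    · omega
    · refine ⟨min_le_right _ _, ?_⟩
      intro p hp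
      have hpm : p < m := lt_of_lt_of_le hp (min_le_right _ _)
      have hip : i + p < P.length := by omega
      have := spec1.2 p (lt_of_lt_of_le hp (min_le_left _ _))
      rwa [hgetP p hip, hgetQ p] at this
end
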